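/- Let u_K be the numerical schemes defined by the truncated explicit formula (Benjamin–Ono case): û_K(t,k) = ⟨u^k, 1⟩ for 0 ≤ k < K with u⁰ = Π_{n(0)}u₀ and u^k = e^{it(I+2L_{n(k)})}S* u^{k-1}, extended by conjugate symmetry to negative frequencies and zero for |k| ≥ K. If n(0) ≥ 1, then ∫_T u_K(t,x) dx = ∫_T u₀(x) dx for all t, and ‖u_K(t)‖_{L²} ≤ ‖u₀‖_{L²}. -/

import Mathlib

open scoped ComplexConjugate ENNReal

noncomputable section

/-- The Hardy space `L²₊`, realized on the Fourier side as `ℓ²(ℕ)`. -/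
abbrev Hp : Type := lp (fun _ : ℕ => ℂ) 2

/-- The left shift `S* = Π(e^{-ix}·)` on the Hardy space: `(S*f)^(k) = f̂(k+1)`. -/
def shiftStar (f : Hp) : Hp :=
  ⟨fun k => f (k + 1), by
    have h : Summable fun k : ℕ => ‖f k‖ ^ (2 : ℝ≥0∞).toReal :=
      (memℓp_gen_iff (by norm_num)).mp (lp.memℓp f)
    exact memℓp_gen (h.comp_injective (add_left_injective 1))⟩

lemma hpSummable (f : Hp) : Summable fun j : ℕ => ‖(f : ℕ → ℂ) j‖ ^ 2 := by
  have h : Summable fun k : ℕ => ‖(f : ℕ → ℂ) k‖ ^ (2 : ℝ≥0∞).toReal :=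
    (memℓp_gen_iff (by norm_num)).mp (lp.memℓp f)
  have h2 : (2 : ℝ≥0∞).toReal = (2 : ℕ) := by norm_num
  simpa [h2, Real.rpow_natCast] using h

lemma hpNorm (f : Hp) : ‖f‖ ^ 2 = ∑' j : ℕ, ‖(f : ℕ → ℂ) j‖ ^ 2 := by
  have h := lp.norm_rpow_eq_tsum (p := 2) (by norm_num) f
  have h2 : (2 : ℝ≥0∞).toReal = (2 : ℕ) := by norm_num
  simp only [h2, Real.rpow_natCast] at h
  exact_mod_cast h

lemma shiftStar_coe (f : Hp) (j : ℕ) : (shiftStar f : ℕ → ℂ) j = (f : ℕ → ℂ) (j + 1) := rfl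

theorem stmt19 (u₀ : ℤ → ℂ) (hu₀ : Summable fun k : ℤ => ‖u₀ k‖ ^ 2)
    (hreal : ∀ k : ℤ, u₀ (-k) = conj (u₀ k))
    (K : ℕ) (hK : 1 ≤ K) (n₀ : ℕ) (hn₀ : 1 ≤ n₀)
    (V : ℕ → Hp ≃ₗᵢ[ℂ] Hp) (w : ℕ → Hp)
    (hw0 : ∀ j : ℕ, (w 0 : ℕ → ℂ) j = if j < n₀ then u₀ (j : ℤ) else 0)
    (hrec : ∀ k : ℕ, 1 ≤ k → w k = V k (shiftStar (w (k - 1))))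
    (c : ℤ → ℂ)
    (hc : ∀ k : ℤ, c k =
      if 0 ≤ k ∧ k < (K : ℤ) then (w k.toNat : ℕ → ℂ) 0
      else if -(K : ℤ) < k ∧ k < 0 then conj ((w (-k).toNat : ℕ → ℂ) 0)
      else 0) :
    c 0 = u₀ 0 ∧ ∑' k : ℤ, ‖c k‖ ^ 2 ≤ ∑' k : ℤ, ‖u₀ k‖ ^ 2 := by
  set N : Hp → ℝ := fun f => ∑' j : ℕ, ‖(f : ℕ → ℂ) j‖ ^ 2 with hN
  set a : ℕ → ℝ := fun k => ‖(w k : ℕ → ℂ) 0‖ ^ 2 with ha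
  have hw00 : (w 0 : ℕ → ℂ) 0 = u₀ 0 := by
    simpa [show (0 : ℕ) < n₀ from hn₀] using hw0 0
  have hc0 : c 0 = u₀ 0 := by
    rw [hc 0]
    simp [hw00, show (0 : ℤ) < (K : ℤ) from by exact_mod_cast hK, show K ≠ 0 by omega]
  refine ⟨hc0, ?_⟩
  have hNshift : ∀ f : Hp, N (shiftStar f) = N f - ‖(f : ℕ → ℂ) 0‖ ^ 2 := by
    intro f
    have h0 := Summable.tsum_eq_zero_add (f := fun j : ℕ => ‖(f : ℕ → ℂ) j‖ ^ 2) (hpSummable f)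
    simp only [hN, shiftStar_coe]
    dsimp only at h0 ⊢
    linarith
  have hNV : ∀ k (g : Hp), N ((V k) g) = N g := by
    intro k g
    rw [hN]
    simp only [← hpNorm]
    rw [(V k).norm_map]
  have hstep : ∀ m : ℕ, N (w (m + 1)) = N (w m) - a m := by
    intro m
    have h1 := hrec (m + 1) (by omega)
    simp only [Nat.add_sub_cancel] at h1
    rw [h1, hNV, hNshift]
  have hsum : ∀ m : ℕ, ∑ k ∈ Finset.range m, a k = N (w 0) - N (w m) := by
    intro m
    induction m with
    | zero => simp
    | succ m ih => rw [Finset.sum_range_succ, ih, hstep m]; ring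
  have hNnonneg : ∀ f : Hp, 0 ≤ N f := fun f => tsum_nonneg fun j => sq_nonneg _
  have haN : ∀ m, a m ≤ N (w m) := fun m =>
    Summable.le_tsum (hpSummable (w m)) 0 fun j _ => sq_nonneg _
  have hSle : ∀ m : ℕ, ∑ k ∈ Finset.range m, a k ≤ N (w 0) := by
    intro m; rw [hsum m]; linarith [hNnonneg (w m)]
  have hupos : Summable fun n : ℕ => ‖u₀ (n : ℤ)‖ ^ 2 :=
    hu₀.comp_injective (fun x y h => by exact_mod_cast h)
  have hNw0 : N (w 0) ≤ ∑' n : ℕ, ‖u₀ (n : ℤ)‖ ^ 2 := by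
    have h1 : N (w 0) = ∑ j ∈ Finset.range n₀, ‖u₀ (j : ℤ)‖ ^ 2 := by
      rw [hN]
      dsimp only
      rw [tsum_eq_sum (s := Finset.range n₀)]
      · exact Finset.sum_congr rfl fun j hj => by
          rw [hw0 j]; simp [Finset.mem_range.mp hj]
      · intro j hj
        rw [hw0 j]; simp [Finset.mem_range.not.mp hj]
    rw [h1]
    exact Summable.sum_le_tsum _ (fun j _ => sq_nonneg _) hupos
  have hcpos : ∀ n : ℕ, ‖c (n : ℤ)‖ ^ 2 = if n < K then a n else 0 := by
    intro n
    rw [hc n]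
    by_cases h : n < K
    · simp [h, show (n : ℤ) < (K : ℤ) from by exact_mod_cast h, ha]
    · have h1 : ¬ ((n : ℤ) < (K : ℤ)) := by exact_mod_cast h
      simp [h, h1]
  have hcneg : ∀ n : ℕ, ‖c (-(n + 1) : ℤ)‖ ^ 2 = if n + 1 < K then a (n + 1) else 0 := by
    intro n
    rw [hc (-(n + 1) : ℤ)]
    rw [if_neg (by omega)]
    by_cases h : n + 1 < K
    · rw [if_pos ⟨by omega, by omega⟩, if_pos h]
      have h2 : (-(-(n + 1 : ℤ))).toNat = n + 1 := by omega
      rw [h2, RCLike.norm_conj]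
    · rw [if_neg (by omega), if_neg h]
      simp
  have hsumcpos : Summable fun n : ℕ => ‖c (n : ℤ)‖ ^ 2 := by
    apply summable_of_ne_finset_zero (s := Finset.range K)
    intro n hn
    rw [hcpos n, if_neg (Finset.mem_range.not.mp hn)]
  have hsumcneg : Summable fun n : ℕ => ‖c (-(n + 1) : ℤ)‖ ^ 2 := by
    apply summable_of_ne_finset_zero (s := Finset.range K)
    intro n hn
    rw [hcneg n, if_neg (by have := Finset.mem_range.not.mp hn; omega)]
  have hLHS : (∑' k : ℤ, ‖c k‖ ^ 2) =
      (∑' n : ℕ, ‖c (n : ℤ)‖ ^ 2) + ∑' n : ℕ, ‖c (-(n + 1) : ℤ)‖ ^ 2 :=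
    tsum_of_nat_of_neg_add_one hsumcpos hsumcneg
  have hLpos : (∑' n : ℕ, ‖c (n : ℤ)‖ ^ 2) = ∑ k ∈ Finset.range K, a k := by
    rw [tsum_eq_sum (s := Finset.range K)
      (fun n hn => by rw [hcpos n, if_neg (Finset.mem_range.not.mp hn)])]
    exact Finset.sum_congr rfl fun n hn => by
      rw [hcpos n, if_pos (Finset.mem_range.mp hn)]
  have hLneg : (∑' n : ℕ, ‖c (-(n + 1) : ℤ)‖ ^ 2) = ∑ n ∈ Finset.range (K - 1), a (n + 1) := by
    rw [tsum_eq_sum (s := Finset.range (K - 1))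
      (fun n hn => by
        rw [hcneg n, if_neg (by have := Finset.mem_range.not.mp hn; omega)])]
    exact Finset.sum_congr rfl fun n hn => by
      rw [hcneg n, if_pos (by have := Finset.mem_range.mp hn; omega)]
  have hsumuneg : Summable fun n : ℕ => ‖u₀ (-(n + 1) : ℤ)‖ ^ 2 :=
    hu₀.comp_injective (fun x y h => by omega)
  have hRHS : (∑' k : ℤ, ‖u₀ k‖ ^ 2) =
      (∑' n : ℕ, ‖u₀ (n : ℤ)‖ ^ 2) + ∑' n : ℕ, ‖u₀ (-(n + 1) : ℤ)‖ ^ 2 :=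
    tsum_of_nat_of_neg_add_one hupos hsumuneg
  have hRneg : (∑' n : ℕ, ‖u₀ (-(n + 1) : ℤ)‖ ^ 2) = ∑' n : ℕ, ‖u₀ ((n : ℤ) + 1)‖ ^ 2 := by
    congr 1; funext n
    rw [hreal ((n : ℤ) + 1)]
    simp
  have hRposSplit : (∑' n : ℕ, ‖u₀ (n : ℤ)‖ ^ 2) =
      ‖u₀ 0‖ ^ 2 + ∑' n : ℕ, ‖u₀ ((n : ℤ) + 1)‖ ^ 2 := by
    have h0 := Summable.tsum_eq_zero_add (f := fun n : ℕ => ‖u₀ (n : ℤ)‖ ^ 2) hupos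
    simpa using h0
  have hTail : ∑ n ∈ Finset.range (K - 1), a (n + 1) = (∑ k ∈ Finset.range K, a k) - a 0 := by
    obtain ⟨m, rfl⟩ : ∃ m, K = m + 1 := ⟨K - 1, by omega⟩
    simp only [Nat.add_sub_cancel]
    rw [Finset.sum_range_succ' _ m]
    ring
  have ha0 : a 0 = ‖u₀ 0‖ ^ 2 := by rw [ha]; dsimp only; rw [hw00]
  have hT : (0 : ℝ) ≤ ∑' n : ℕ, ‖u₀ ((n : ℤ) + 1)‖ ^ 2 := tsum_nonneg fun _ => sq_nonneg _
  have hS := hSle K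
  rw [hLHS, hLpos, hLneg, hTail, hRHS, hRneg, hRposSplit]
  have hmain : (∑ k ∈ Finset.range K, a k) ≤ ‖u₀ 0‖ ^ 2 + ∑' n : ℕ, ‖u₀ ((n : ℤ) + 1)‖ ^ 2 := by
    calc (∑ k ∈ Finset.range K, a k) ≤ N (w 0) := hS
    _ ≤ ∑' n : ℕ, ‖u₀ (n : ℤ)‖ ^ 2 := hNw0
    _ = _ := hRposSplit
  linarith [hmain, ha0 ▸ haN 0, hNw0, hRposSplit ▸ hNw0]
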